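/- Let a < 0 be a squarefree integer and b a prime with (a/b) = -1. For F = ℚ(√a) with ring of integers O_F, order I₀ = O_F ⊕ O_F·Ω in the quaternion algebra (a,b/ℚ), and an order I with D'I ⊆ D·I₀ ⊆ I for nonzero integers D, D': for every prime p with p ∤ 2abDD' and (a/p) = -1, and every primitive α = ξ + ηΩ ∈ I with N(α) = |ξ|² - b|η|² ≡ 0 (mod p), one has ord_p(N(ξ)) = ord_p(N(η)) = 0; in particular ξ·η ≠ 0. -/

import Mathlib

section helpers

lemma zmod_descent' {p : ℕ} (hp : p.Prime) {a u v : ℤ}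
    (hap : @legendreSym p ⟨hp⟩ a = -1)
    (h : (p : ℤ) ∣ u ^ 2 - a * v ^ 2) : (p : ℤ) ∣ u ∧ (p : ℤ) ∣ v := by
  haveI : Fact p.Prime := ⟨hp⟩
  have hns : ¬ IsSquare ((a : ZMod p)) := (legendreSym.eq_neg_one_iff p).mp hap
  have h0 : ((u : ZMod p)) ^ 2 = (a : ZMod p) * (v : ZMod p) ^ 2 := by
    have := (ZMod.intCast_zmod_eq_zero_iff_dvd _ p).mpr h
    push_cast at this
    linear_combination this
  have hv : (v : ZMod p) = 0 := by
    by_contra hv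
    exact hns ⟨(u : ZMod p) / (v : ZMod p), by field_simp; linear_combination -h0⟩
  have hu : (u : ZMod p) = 0 := by
    have : ((u : ZMod p)) ^ 2 = 0 := by rw [h0, hv]; ring
    exact pow_eq_zero_iff (two_ne_zero) |>.mp this
  exact ⟨(ZMod.intCast_zmod_eq_zero_iff_dvd _ p).mp hu,
         (ZMod.intCast_zmod_eq_zero_iff_dvd _ p).mp hv⟩

lemma OF_descent' (a : ℤ) (OF : Set (ℚ × ℚ))
    (hOF : OF = if a % 4 = 1
      then {xy : ℚ × ℚ | ∃ m n : ℤ, xy.1 = (m : ℚ) + (n : ℚ) / 2 ∧ xy.2 = (n : ℚ) / 2}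
      else {xy : ℚ × ℚ | ∃ m n : ℤ, xy.1 = (m : ℚ) ∧ xy.2 = (n : ℚ)})
    {p : ℕ} (pp : Prime (p : ℤ)) (hp2 : ¬ (p : ℤ) ∣ 2)
    {x y : ℚ} (hxy : (x, y) ∈ OF) :
    ∃ u v : ℤ, x = (u : ℚ) / 2 ∧ y = (v : ℚ) / 2 ∧
      ((p : ℤ) ∣ u → (p : ℤ) ∣ v → (x / p, y / p) ∈ OF) := by
  have hpz : (p : ℤ) ≠ 0 := pp.ne_zero
  have hp0 : (p : ℚ) ≠ 0 := by exact_mod_cast (by exact_mod_cast hpz : (p : ℚ) ≠ 0)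
  subst hOF
  split_ifs at hxy ⊢ with h4
  · obtain ⟨m, n, hx, hy⟩ := hxy
    replace hx : x = (m : ℚ) + (n : ℚ) / 2 := hx
    replace hy : y = (n : ℚ) / 2 := hy
    refine ⟨2 * m + n, n, by rw [hx]; push_cast; ring, hy, ?_⟩
    intro hu hv
    have hm : (p : ℤ) ∣ m := by
      have h2m : (p : ℤ) ∣ 2 * m := by
        have := dvd_sub hu hv; simpa using this
      exact (pp.dvd_mul.mp h2m).resolve_left hp2
    obtain ⟨m', hm'⟩ := hm
    obtain ⟨n', hn'⟩ := hv
    refine ⟨m', n', show x / p = _ from ?_, show y / p = _ from ?_⟩ <;>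
      simp only [hx, hy, hm', hn'] <;> push_cast <;> field_simp <;> try ring
  · obtain ⟨m, n, hx, hy⟩ := hxy
    replace hx : x = (m : ℚ) := hx
    replace hy : y = (n : ℚ) := hy
    refine ⟨2 * m, 2 * n, by rw [hx]; push_cast; ring, by rw [hy]; push_cast; ring, ?_⟩
    intro hu hv
    have hm : (p : ℤ) ∣ m := ((pp.dvd_mul.mp hu).resolve_left hp2)
    have hn : (p : ℤ) ∣ n := ((pp.dvd_mul.mp hv).resolve_left hp2)
    obtain ⟨m', hm'⟩ := hm
    obtain ⟨n', hn'⟩ := hn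
    refine ⟨m', n', show x / p = _ from ?_, show y / p = _ from ?_⟩ <;>
      simp only [hx, hy, hm', hn'] <;> push_cast <;> field_simp

end helpers


/-- In the quaternion algebra (a,b/ℚ) with a < 0 squarefree, (a/b) = -1,
I₀ = O_F ⊕ O_F Ω, and I an order with D'·I ⊆ D·I₀ ⊆ I: for every prime p with
p ∤ 2abDD' and (a/p) = -1 and every primitive α = ξ + ηΩ ∈ I with p | N(α), one
has ord_p N(ξ) = ord_p N(η) = 0; in particular ξ ≠ 0 and η ≠ 0. -/
theorem primitive_norm_valuation_zero
    (a : ℤ) (hsf : Squarefree a) (hneg : a < 0)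
    (b : ℕ) (hb : b.Prime) (hab : @legendreSym b ⟨hb⟩ a = -1)
    (OF : Set (ℚ × ℚ))
    (hOF : OF = if a % 4 = 1
      then {xy : ℚ × ℚ | ∃ m n : ℤ, xy.1 = (m : ℚ) + (n : ℚ) / 2 ∧ xy.2 = (n : ℚ) / 2}
      else {xy : ℚ × ℚ | ∃ m n : ℤ, xy.1 = (m : ℚ) ∧ xy.2 = (n : ℚ)})
    (I : Subring (QuaternionAlgebra ℚ (a : ℚ) 0 (b : ℚ)))
    (D D' : ℤ) (hD : D ≠ 0) (hD' : D' ≠ 0)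
    (h1 : ∀ α ∈ I, ∃ β : QuaternionAlgebra ℚ (a : ℚ) 0 (b : ℚ),
      ((β.re, β.imI) ∈ OF ∧ (β.imJ, β.imK) ∈ OF) ∧
        ((D' : ℚ) : QuaternionAlgebra ℚ (a : ℚ) 0 (b : ℚ)) * α =
          ((D : ℚ) : QuaternionAlgebra ℚ (a : ℚ) 0 (b : ℚ)) * β)
    (h2 : ∀ β : QuaternionAlgebra ℚ (a : ℚ) 0 (b : ℚ),
      (β.re, β.imI) ∈ OF → (β.imJ, β.imK) ∈ OF →
        ((D : ℚ) : QuaternionAlgebra ℚ (a : ℚ) 0 (b : ℚ)) * β ∈ I)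
    (p : ℕ) (hp : p.Prime)
    (hpdvd : ¬ ((p : ℤ) ∣ 2 * a * (b : ℤ) * D * D'))
    (hap : @legendreSym p ⟨hp⟩ a = -1)
    (α : QuaternionAlgebra ℚ (a : ℚ) 0 (b : ℚ)) (hαI : α ∈ I)
    (hprim : ∀ (k : ℤ), ¬ IsUnit k → ∀ β ∈ I,
      α ≠ ((k : ℚ) : QuaternionAlgebra ℚ (a : ℚ) 0 (b : ℚ)) * β)
    (m : ℤ)
    (hm : ((α.re ^ 2 - (a : ℚ) * α.imI ^ 2) - (b : ℚ) * (α.imJ ^ 2 - (a : ℚ) * α.imK ^ 2)) = (m : ℚ))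
    (hmp : (p : ℤ) ∣ m) :
    padicValRat p (α.re ^ 2 - (a : ℚ) * α.imI ^ 2) = 0 ∧
      padicValRat p (α.imJ ^ 2 - (a : ℚ) * α.imK ^ 2) = 0 ∧
      ¬ (α.re = 0 ∧ α.imI = 0) ∧ ¬ (α.imJ = 0 ∧ α.imK = 0) := by
  haveI : Fact p.Prime := ⟨hp⟩
  have pp : Prime (p : ℤ) := Nat.prime_iff_prime_int.mp hp
  -- divisibility facts
  have hp2 : ¬ (p : ℤ) ∣ 2 := fun h => hpdvd ((((h.mul_right a).mul_right b).mul_right D).mul_right D')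
  have hpa : ¬ (p : ℤ) ∣ a := fun h => hpdvd ((((h.mul_left 2).mul_right b).mul_right D).mul_right D')
  have hpb : ¬ (p : ℤ) ∣ (b : ℤ) := fun h => hpdvd (((h.mul_left (2 * a)).mul_right D).mul_right D')
  have hpD : ¬ (p : ℤ) ∣ D := fun h => hpdvd ((h.mul_left (2 * a * b)).mul_right D')
  have hpD' : ¬ (p : ℤ) ∣ D' := fun h => hpdvd (h.mul_left (2 * a * b * D))
  have hpQ : (p : ℚ) ≠ 0 := Nat.cast_ne_zero.mpr hp.ne_zero
  have hDQ : (D : ℚ) ≠ 0 := Int.cast_ne_zero.mpr hD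
  have hD'Q : (D' : ℚ) ≠ 0 := Int.cast_ne_zero.mpr hD'
  -- get β
  obtain ⟨β, ⟨hβ1, hβ2⟩, hβeq⟩ := h1 α hαI
  rw [QuaternionAlgebra.coe_mul_eq_smul, QuaternionAlgebra.coe_mul_eq_smul] at hβeq
  have e_re : (D' : ℚ) * α.re = (D : ℚ) * β.re := by
    have := congrArg QuaternionAlgebra.re hβeq; simpa [smul_eq_mul] using this
  have e_imI : (D' : ℚ) * α.imI = (D : ℚ) * β.imI := by
    have := congrArg QuaternionAlgebra.imI hβeq; simpa [smul_eq_mul] using this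
  have e_imJ : (D' : ℚ) * α.imJ = (D : ℚ) * β.imJ := by
    have := congrArg QuaternionAlgebra.imJ hβeq; simpa [smul_eq_mul] using this
  have e_imK : (D' : ℚ) * α.imK = (D : ℚ) * β.imK := by
    have := congrArg QuaternionAlgebra.imK hβeq; simpa [smul_eq_mul] using this
  obtain ⟨u, v, hu2, hv2, hdesc1⟩ := OF_descent' a OF hOF pp hp2 hβ1
  obtain ⟨s, t, hs2, ht2, hdesc2⟩ := OF_descent' a OF hOF pp hp2 hβ2
  -- norm identities over ℚ
  have hU : (4 : ℚ) * (D' : ℚ) ^ 2 * (α.re ^ 2 - (a : ℚ) * α.imI ^ 2)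
      = (D : ℚ) ^ 2 * ((u ^ 2 - a * v ^ 2 : ℤ) : ℚ) := by
    rw [hu2] at e_re; rw [hv2] at e_imI
    push_cast
    linear_combination (4 * (D' : ℚ) * α.re + 2 * (D : ℚ) * u) * e_re
      - (a : ℚ) * (4 * (D' : ℚ) * α.imI + 2 * (D : ℚ) * v) * e_imI
  have hS : (4 : ℚ) * (D' : ℚ) ^ 2 * (α.imJ ^ 2 - (a : ℚ) * α.imK ^ 2)
      = (D : ℚ) ^ 2 * ((s ^ 2 - a * t ^ 2 : ℤ) : ℚ) := by
    rw [hs2] at e_imJ; rw [ht2] at e_imK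
    push_cast
    linear_combination (4 * (D' : ℚ) * α.imJ + 2 * (D : ℚ) * s) * e_imJ
      - (a : ℚ) * (4 * (D' : ℚ) * α.imK + 2 * (D : ℚ) * t) * e_imK
  -- integer identity
  have hZ : D ^ 2 * (u ^ 2 - a * v ^ 2) - (b : ℤ) * D ^ 2 * (s ^ 2 - a * t ^ 2)
      = 4 * D' ^ 2 * m := by
    have hq : (D : ℚ) ^ 2 * ((u ^ 2 - a * v ^ 2 : ℤ) : ℚ)
        - (b : ℚ) * (D : ℚ) ^ 2 * ((s ^ 2 - a * t ^ 2 : ℤ) : ℚ)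
        = 4 * (D' : ℚ) ^ 2 * (m : ℚ) := by
      linear_combination -hU + (b : ℚ) * hS + 4 * (D' : ℚ) ^ 2 * hm
    exact_mod_cast hq
  -- the key contradiction
  have key : ¬ ((p : ℤ) ∣ (u ^ 2 - a * v ^ 2) ∧ (p : ℤ) ∣ (s ^ 2 - a * t ^ 2)) := by
    rintro ⟨hU', hS'⟩
    obtain ⟨huu, hvv⟩ := zmod_descent' hp hap hU'
    obtain ⟨hss, htt⟩ := zmod_descent' hp hap hS'
    have hmem1 := hdesc1 huu hvv
    have hmem2 := hdesc2 hss htt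
    set γ : QuaternionAlgebra ℚ (a : ℚ) 0 (b : ℚ) :=
      ⟨β.re / p, β.imI / p, β.imJ / p, β.imK / p⟩ with hγ
    have hγI : ((D : ℚ) : QuaternionAlgebra ℚ (a : ℚ) 0 (b : ℚ)) * γ ∈ I := h2 γ hmem1 hmem2
    obtain ⟨x, y, hxy⟩ := (pp.coprime_iff_not_dvd).mpr hpD'
    set δ : QuaternionAlgebra ℚ (a : ℚ) 0 (b : ℚ) :=
      ((x : ℚ) : QuaternionAlgebra ℚ (a : ℚ) 0 (b : ℚ)) * α +
      ((y : ℚ) : QuaternionAlgebra ℚ (a : ℚ) 0 (b : ℚ)) *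
        (((D : ℚ) : QuaternionAlgebra ℚ (a : ℚ) 0 (b : ℚ)) * γ) with hδ
    have hδI : δ ∈ I := by
      refine I.add_mem (I.mul_mem ?_ hαI) (I.mul_mem ?_ hγI)
      · have : (((x : ℤ) : ℚ) : QuaternionAlgebra ℚ (a : ℚ) 0 (b : ℚ))
            = ((x : ℤ) : QuaternionAlgebra ℚ (a : ℚ) 0 (b : ℚ)) := by push_cast; ring
        rw [this]; exact intCast_mem I x
      · have : (((y : ℤ) : ℚ) : QuaternionAlgebra ℚ (a : ℚ) 0 (b : ℚ))
            = ((y : ℤ) : QuaternionAlgebra ℚ (a : ℚ) 0 (b : ℚ)) := by push_cast; ring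
        rw [this]; exact intCast_mem I y
    have hxyQ : (x : ℚ) * (p : ℚ) + (y : ℚ) * (D' : ℚ) = 1 := by exact_mod_cast hxy
    have hmain : α = ((((p : ℤ) : ℚ)) : QuaternionAlgebra ℚ (a : ℚ) 0 (b : ℚ)) * δ := by
      ext <;>
        simp only [hδ, hγ, QuaternionAlgebra.coe_mul_eq_smul, QuaternionAlgebra.re_smul,
          QuaternionAlgebra.imI_smul, QuaternionAlgebra.imJ_smul, QuaternionAlgebra.imK_smul,
          QuaternionAlgebra.re_add, QuaternionAlgebra.imI_add, QuaternionAlgebra.imJ_add,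
          QuaternionAlgebra.imK_add, smul_eq_mul, Int.cast_natCast] <;>
        field_simp
      · linear_combination -α.re * hxyQ + (y : ℚ) * e_re
      · linear_combination -α.imI * hxyQ + (y : ℚ) * e_imI
      · linear_combination -α.imJ * hxyQ + (y : ℚ) * e_imJ
      · linear_combination -α.imK * hxyQ + (y : ℚ) * e_imK
    exact hprim ((p : ℕ) : ℤ) pp.not_unit δ hδI hmain
  -- p divides neither norm numerator
  have hpU : ¬ (p : ℤ) ∣ (u ^ 2 - a * v ^ 2) := by
    intro h
    apply key
    refine ⟨h, ?_⟩
    have : (p : ℤ) ∣ (b : ℤ) * D ^ 2 * (s ^ 2 - a * t ^ 2) := by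
      have : (b : ℤ) * D ^ 2 * (s ^ 2 - a * t ^ 2)
          = D ^ 2 * (u ^ 2 - a * v ^ 2) - 4 * D' ^ 2 * m := by linarith [hZ]
      rw [this]
      exact dvd_sub (h.mul_left _) ((hmp.mul_left _))
    rcases pp.dvd_mul.mp this with h' | h'
    · rcases pp.dvd_mul.mp h' with h'' | h''
      · exact absurd h'' hpb
      · exact absurd ((pp.dvd_of_dvd_pow h'')) hpD
    · exact h'
  have hpS : ¬ (p : ℤ) ∣ (s ^ 2 - a * t ^ 2) := by
    intro h
    apply key
    refine ⟨?_, h⟩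
    have : (p : ℤ) ∣ D ^ 2 * (u ^ 2 - a * v ^ 2) := by
      have : D ^ 2 * (u ^ 2 - a * v ^ 2)
          = 4 * D' ^ 2 * m + (b : ℤ) * D ^ 2 * (s ^ 2 - a * t ^ 2) := by linarith [hZ]
      rw [this]
      exact dvd_add (hmp.mul_left _) (h.mul_left _)
    rcases pp.dvd_mul.mp this with h' | h'
    · exact absurd (pp.dvd_of_dvd_pow h') hpD
    · exact h'
  -- final valuation computations
  have hUne : u ^ 2 - a * v ^ 2 ≠ 0 := fun h => hpU (h ▸ dvd_zero _)
  have hSne : s ^ 2 - a * t ^ 2 ≠ 0 := fun h => hpS (h ▸ dvd_zero _)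
  have hXeq : α.re ^ 2 - (a : ℚ) * α.imI ^ 2
      = ((D ^ 2 * (u ^ 2 - a * v ^ 2) : ℤ) : ℚ) / ((4 * D' ^ 2 : ℤ) : ℚ) := by
    push_cast
    push_cast at hU
    field_simp
    linear_combination hU
  have hYeq : α.imJ ^ 2 - (a : ℚ) * α.imK ^ 2
      = ((D ^ 2 * (s ^ 2 - a * t ^ 2) : ℤ) : ℚ) / ((4 * D' ^ 2 : ℤ) : ℚ) := by
    push_cast
    push_cast at hS
    field_simp
    linear_combination hS
  have hnum1 : ¬ (p : ℤ) ∣ D ^ 2 * (u ^ 2 - a * v ^ 2) := by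
    intro h
    rcases pp.dvd_mul.mp h with h' | h'
    · exact absurd (pp.dvd_of_dvd_pow h') hpD
    · exact hpU h'
  have hnum2 : ¬ (p : ℤ) ∣ D ^ 2 * (s ^ 2 - a * t ^ 2) := by
    intro h
    rcases pp.dvd_mul.mp h with h' | h'
    · exact absurd (pp.dvd_of_dvd_pow h') hpD
    · exact hpS h'
  have hden : ¬ (p : ℤ) ∣ 4 * D' ^ 2 := by
    intro h
    rcases pp.dvd_mul.mp h with h' | h'
    · have h'' : (p : ℤ) ∣ 2 * 2 := by rwa [show (2 * 2 : ℤ) = 4 by norm_num]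
      rcases pp.dvd_mul.mp h'' with h3 | h3 <;> exact hp2 h3
    · exact absurd (pp.dvd_of_dvd_pow h') hpD'
  have hval : ∀ (N : ℤ), ¬ (p : ℤ) ∣ N →
      padicValRat p (((N : ℤ) : ℚ) / ((4 * D' ^ 2 : ℤ) : ℚ)) = 0 := by
    intro N hN
    have hN0 : N ≠ 0 := fun h => hN (h ▸ dvd_zero _)
    have hd0 : (4 * D' ^ 2 : ℤ) ≠ 0 := by positivity
    rw [padicValRat.div (q := ((N : ℤ) : ℚ)) (by exact_mod_cast hN0) (by exact_mod_cast hd0),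
      padicValRat.of_int, padicValRat.of_int,
      padicValInt.eq_zero_of_not_dvd hN, padicValInt.eq_zero_of_not_dvd hden]
    simp
  refine ⟨?_, ?_, ?_, ?_⟩
  · rw [hXeq]; exact hval _ hnum1
  · rw [hYeq]; exact hval _ hnum2
  · rintro ⟨h1', h2'⟩
    apply hUne
    have hz : (0 : ℚ) = (D : ℚ) ^ 2 * ((u ^ 2 - a * v ^ 2 : ℤ) : ℚ) := by
      rw [← hU, h1', h2']; ring
    have h0 : ((u ^ 2 - a * v ^ 2 : ℤ) : ℚ) = 0 := by
      rcases mul_eq_zero.mp hz.symm with h | h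
      · exact ((hDQ (pow_eq_zero_iff two_ne_zero |>.mp h)).elim)
      · exact h
    exact_mod_cast h0
  · rintro ⟨h1', h2'⟩
    apply hSne
    have hz : (0 : ℚ) = (D : ℚ) ^ 2 * ((s ^ 2 - a * t ^ 2 : ℤ) : ℚ) := by
      rw [← hS, h1', h2']; ring
    have h0 : ((s ^ 2 - a * t ^ 2 : ℤ) : ℚ) = 0 := by
      rcases mul_eq_zero.mp hz.symm with h | h
      · exact ((hDQ (pow_eq_zero_iff two_ne_zero |>.mp h)).elim)
      · exact h
    exact_mod_cast h0
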